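/- A Cartesian differential category with a Conway operator is a traced Cartesian differential category if and only if the induced trace operator Tr (defined by Tr(⟨f₁,f₂⟩)(a) = f₁(a, μx.f₂(a,x))) commutes with the tangent bundle functor up to the middle-swap isomorphism: T(Tr(f)) = Tr(c ∘ T(f) ∘ c) for every f : A×X → B×X. -/

import Mathlib

open CategoryTheory CategoryTheory.Limits

universe v u

variable (C : Type u) [Category.{v} C] [HasFiniteProducts C]

/-- Cartesian left additive category: hom-sets are commutative monoids,
precomposition is additive, and the projections are additive maps. -/
class CartesianLeftAdditive [∀ A B : C, AddCommMonoid (A ⟶ B)] : Prop where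
  comp_add : ∀ {X A B : C} (x : X ⟶ A) (f g : A ⟶ B), x ≫ (f + g) = x ≫ f + x ≫ g
  comp_zero : ∀ {X A B : C} (x : X ⟶ A), x ≫ (0 : A ⟶ B) = 0
  add_comp_fst : ∀ {X A B : C} (x y : X ⟶ A ⨯ B),
    (x + y) ≫ (prod.fst : A ⨯ B ⟶ A) = x ≫ prod.fst + y ≫ prod.fst
  add_comp_snd : ∀ {X A B : C} (x y : X ⟶ A ⨯ B),
    (x + y) ≫ (prod.snd : A ⨯ B ⟶ B) = x ≫ prod.snd + y ≫ prod.snd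
  zero_comp_fst : ∀ {X A B : C}, (0 : X ⟶ A ⨯ B) ≫ (prod.fst : A ⨯ B ⟶ A) = 0
  zero_comp_snd : ∀ {X A B : C}, (0 : X ⟶ A ⨯ B) ≫ (prod.snd : A ⨯ B ⟶ B) = 0

/-- A differential combinator satisfying the axioms [CD.1]-[CD.7] of a
Cartesian differential category. -/
structure DiffComb [∀ A B : C, AddCommMonoid (A ⟶ B)] where
  D : ∀ {A B : C}, (A ⟶ B) → (A ⨯ A ⟶ B)
  cd1_zero : ∀ {A B : C}, D (0 : A ⟶ B) = 0
  cd1_add : ∀ {A B : C} (f g : A ⟶ B), D (f + g) = D f + D g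
  cd2_zero : ∀ {A B X : C} (f : A ⟶ B) (x : X ⟶ A), prod.lift x 0 ≫ D f = 0
  cd2_add : ∀ {A B X : C} (f : A ⟶ B) (x y z : X ⟶ A),
    prod.lift x (y + z) ≫ D f = prod.lift x y ≫ D f + prod.lift x z ≫ D f
  cd3_id : ∀ {A : C}, D (𝟙 A) = prod.snd
  cd3_fst : ∀ {A B : C},
    D (prod.fst : A ⨯ B ⟶ A) = (prod.snd : (A ⨯ B) ⨯ (A ⨯ B) ⟶ A ⨯ B) ≫ prod.fst
  cd3_snd : ∀ {A B : C},
    D (prod.snd : A ⨯ B ⟶ B) = (prod.snd : (A ⨯ B) ⨯ (A ⨯ B) ⟶ A ⨯ B) ≫ prod.snd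
  cd4 : ∀ {A B B' : C} (f : A ⟶ B) (g : A ⟶ B'), D (prod.lift f g) = prod.lift (D f) (D g)
  cd5 : ∀ {A B E : C} (f : A ⟶ B) (g : B ⟶ E), D (f ≫ g) = prod.lift (prod.fst ≫ f) (D f) ≫ D g
  cd6 : ∀ {A B X : C} (f : A ⟶ B) (x y z : X ⟶ A),
    prod.lift (prod.lift x y) (prod.lift 0 z) ≫ D (D f) = prod.lift x z ≫ D f
  cd7 : ∀ {A B X : C} (f : A ⟶ B) (x y z : X ⟶ A),
    prod.lift (prod.lift x y) (prod.lift z 0) ≫ D (D f) =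
      prod.lift (prod.lift x z) (prod.lift y 0) ≫ D (D f)

variable {C}

/-- The tangent bundle functor on maps: `T f = ⟨f ∘ π₁, D[f]⟩`. -/
noncomputable def DiffComb.T [∀ A B : C, AddCommMonoid (A ⟶ B)] (Dc : DiffComb C) {A B : C}
    (f : A ⟶ B) : A ⨯ A ⟶ B ⨯ B :=
  prod.lift (prod.fst ≫ f) (Dc.D f)

/-- The canonical middle-swap isomorphism `c = ⟨π₁,π₃,π₂,π₄⟩`. -/
noncomputable def cmap (A B X Y : C) : (A ⨯ B) ⨯ (X ⨯ Y) ⟶ (A ⨯ X) ⨯ (B ⨯ Y) :=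
  prod.lift (prod.map prod.fst prod.fst) (prod.map prod.snd prod.snd)

/-- A parametrized fixpoint operator. -/
structure ParamFix (C : Type u) [Category.{v} C] [HasFiniteProducts C] where
  fix : ∀ {A X : C}, (A ⨯ X ⟶ X) → (A ⟶ X)
  fix_eq : ∀ {A X : C} (f : A ⨯ X ⟶ X), prod.lift (𝟙 A) (fix f) ≫ f = fix f
  natural : ∀ {A B X : C} (g : A ⟶ B) (f : B ⨯ X ⟶ X),
    g ≫ fix f = fix (prod.map g (𝟙 X) ≫ f)

/-- The associativity map `(A ⨯ X) ⨯ Y ⟶ A ⨯ (X ⨯ Y)`. -/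
noncomputable def assoc3 (A X Y : C) : (A ⨯ X) ⨯ Y ⟶ A ⨯ (X ⨯ Y) :=
  prod.lift (prod.fst ≫ prod.fst) (prod.lift (prod.fst ≫ prod.snd) prod.snd)

/-- A Conway operator: a parametrized fixpoint operator satisfying
dinaturality and Bekič's axiom. -/
structure Conway (C : Type u) [Category.{v} C] [HasFiniteProducts C]
    extends ParamFix C where
  dinat : ∀ {A X Y : C} (f : A ⨯ X ⟶ Y) (g : Y ⟶ X),
    fix (f ≫ g) = fix (prod.map (𝟙 A) g ≫ f) ≫ g
  bekic : ∀ {A X Y : C} (f : A ⨯ (X ⨯ Y) ⟶ X) (g : A ⨯ (X ⨯ Y) ⟶ Y),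
    fix (prod.lift f g) =
      prod.lift
        (fix (prod.lift (𝟙 (A ⨯ X)) (fix (assoc3 A X Y ≫ g)) ≫ assoc3 A X Y ≫ f))
        (fix (prod.lift (prod.fst : A ⨯ Y ⟶ A)
          (prod.lift
            ((prod.fst : A ⨯ Y ⟶ A) ≫
              fix (prod.lift (𝟙 (A ⨯ X)) (fix (assoc3 A X Y ≫ g)) ≫ assoc3 A X Y ≫ f))
            (prod.snd : A ⨯ Y ⟶ Y)) ≫ g))

/-- The trace operator induced by a Conway operator:
`Tr(⟨f₁,f₂⟩) = f₁ ∘ ⟨1, fix f₂⟩`. -/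
noncomputable def trOf (P : ParamFix C) {A B X : C} (f : A ⨯ X ⟶ B ⨯ X) : A ⟶ B :=
  prod.lift (𝟙 A) (P.fix (f ≫ prod.snd)) ≫ f ≫ prod.fst

attribute [local simp] prod.lift_fst prod.lift_snd prod.lift_fst_assoc prod.lift_snd_assoc

section Aux

variable [∀ A B : C, AddCommMonoid (A ⟶ B)] (Dc : DiffComb C)

lemma D_comp_fst {A B B' : C} (f : A ⟶ B ⨯ B') :
    Dc.D (f ≫ prod.fst) = Dc.D f ≫ prod.fst := by
  rw [Dc.cd5, Dc.cd3_fst]; simp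

lemma D_comp_snd {A B B' : C} (f : A ⟶ B ⨯ B') :
    Dc.D (f ≫ prod.snd) = Dc.D f ≫ prod.snd := by
  rw [Dc.cd5, Dc.cd3_snd]; simp

lemma T_comp {A B E : C} (f : A ⟶ B) (g : B ⟶ E) :
    Dc.T (f ≫ g) = Dc.T f ≫ Dc.T g := by
  unfold DiffComb.T
  rw [Dc.cd5]
  apply Limits.prod.hom_ext <;> simp

lemma T_proj_fst {A B B' : C} (f : A ⟶ B ⨯ B') :
    Dc.T f ≫ prod.map prod.fst prod.fst = Dc.T (f ≫ prod.fst) := by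
  unfold DiffComb.T
  apply Limits.prod.hom_ext <;> simp [D_comp_fst]

lemma T_proj_snd {A B B' : C} (f : A ⟶ B ⨯ B') :
    Dc.T f ≫ prod.map prod.snd prod.snd = Dc.T (f ≫ prod.snd) := by
  unfold DiffComb.T
  apply Limits.prod.hom_ext <;> simp [D_comp_snd]

/-- If the first component of `w` factors through the first component of the
state, then the first component of `fix w` is computed by a smaller fixpoint. -/
lemma fix_comp_fst (Cw : Conway C) {P A X Y : C} (p : P ⟶ A) (f : A ⨯ X ⟶ X)
    (w : P ⨯ (X ⨯ Y) ⟶ X ⨯ Y)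
    (h1 : w ≫ prod.fst = prod.map p prod.fst ≫ f) :
    Cw.fix w ≫ prod.fst = p ≫ Cw.fix f := by
  have hw : w = prod.lift (w ≫ prod.fst) (w ≫ prod.snd) := by
    apply Limits.prod.hom_ext <;> simp
  rw [hw, Cw.bekic, prod.lift_fst, h1]
  have key : prod.lift (𝟙 (P ⨯ X))
      (Cw.fix (assoc3 P X Y ≫ (w ≫ prod.snd))) ≫ assoc3 P X Y ≫
        prod.map p prod.fst = prod.map p (𝟙 X) := by
    apply Limits.prod.hom_ext <;> simp [assoc3]
  rw [← Category.assoc, ← Category.assoc, Category.assoc _ _ (prod.map p prod.fst),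
    key, Cw.natural]

end Aux

/-- a Cartesian differential category with a Conway operator is a
traced Cartesian differential category (i.e. satisfies the differential-fixpoint
rule) if and only if the induced trace operator commutes with the tangent bundle
functor up to the middle-swap isomorphism: `T(Tr f) = Tr(c ∘ T f ∘ c)`. -/
theorem traced_iff_trace_commutes_with_tangent
    [∀ A B : C, AddCommMonoid (A ⟶ B)] [CartesianLeftAdditive C]
    (Dc : DiffComb C) (Cw : Conway C) :
    (∀ {A X : C} (f : A ⨯ X ⟶ X),
      Dc.D (Cw.fix f) = Cw.fix (cmap A A X X ≫ Dc.T f) ≫ prod.snd) ↔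
    (∀ {A B X : C} (f : A ⨯ X ⟶ B ⨯ X),
      Dc.T (trOf Cw.toParamFix f) =
        trOf Cw.toParamFix (cmap A A X X ≫ Dc.T f ≫ cmap B X B X)) := by
  constructor
  · -- differential-fixpoint ⇒ trace commutes with T
    intro hfix A B X f
    have hfixT : Cw.fix (cmap A A X X ≫ Dc.T (f ≫ prod.snd)) =
        Dc.T (Cw.fix (f ≫ prod.snd)) := by
      apply Limits.prod.hom_ext
      · rw [fix_comp_fst Cw prod.fst (f ≫ prod.snd)]
        · simp [DiffComb.T]
        · simp [cmap, DiffComb.T]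
      · simp only [DiffComb.T, prod.lift_snd]
        exact (hfix (f ≫ prod.snd)).symm
    have hTlift : prod.lift (𝟙 (A ⨯ A)) (Dc.T (Cw.fix (f ≫ prod.snd))) ≫
        cmap A A X X = Dc.T (prod.lift (𝟙 A) (Cw.fix (f ≫ prod.snd))) := by
      apply Limits.prod.hom_ext
      · simp [cmap, DiffComb.T]
      · simp [cmap, DiffComb.T, Dc.cd4, Dc.cd3_id]
    have h2 : (cmap A A X X ≫ Dc.T f ≫ cmap B X B X) ≫ prod.snd =
        cmap A A X X ≫ Dc.T (f ≫ prod.snd) := by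
      rw [Category.assoc, Category.assoc, ← T_proj_snd]
      congr 1
      simp [cmap]
    have h3 : (cmap A A X X ≫ Dc.T f ≫ cmap B X B X) ≫ prod.fst =
        cmap A A X X ≫ Dc.T (f ≫ prod.fst) := by
      rw [Category.assoc, Category.assoc, ← T_proj_fst]
      congr 1
      simp [cmap]
    unfold trOf
    rw [h2, hfixT]
    have : prod.lift (𝟙 (A ⨯ A)) (Dc.T (Cw.fix (f ≫ prod.snd))) ≫
        (cmap A A X X ≫ Dc.T f ≫ cmap B X B X) ≫ prod.fst =
        Dc.T (prod.lift (𝟙 A) (Cw.fix (f ≫ prod.snd))) ≫ Dc.T (f ≫ prod.fst) := by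
      rw [h3, ← Category.assoc, hTlift]
    rw [this, ← T_comp]
  · -- trace commutes with T ⇒ differential-fixpoint
    intro htr A X f
    have hg : trOf Cw.toParamFix (prod.lift f f) = Cw.fix f := by
      unfold trOf
      simp only [prod.lift_snd, prod.lift_fst]
      exact Cw.fix_eq f
    have hh : cmap A A X X ≫ Dc.T (prod.lift f f) ≫ cmap X X X X =
        prod.lift (cmap A A X X ≫ Dc.T f) (cmap A A X X ≫ Dc.T f) := by
      have h1 : Dc.T (prod.lift f f) ≫ cmap X X X X =
          prod.lift (Dc.T f) (Dc.T f) := by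
        apply Limits.prod.hom_ext <;>
          simp [cmap, DiffComb.T, Dc.cd4]
      rw [h1]
      simp
    have htr' := htr (prod.lift f f)
    rw [hg, hh] at htr'
    have hfixu : trOf Cw.toParamFix
        (prod.lift (cmap A A X X ≫ Dc.T f) (cmap A A X X ≫ Dc.T f)) =
        Cw.fix (cmap A A X X ≫ Dc.T f) := by
      unfold trOf
      simp only [prod.lift_snd, prod.lift_fst]
      exact Cw.fix_eq (cmap A A X X ≫ Dc.T f)
    rw [hfixu] at htr'
    have : Dc.T (Cw.fix f) ≫ prod.snd = Dc.D (Cw.fix f) := by simp [DiffComb.T]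
    rw [← this, htr']
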